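/- For convex sets K₁ ⊆ ℝ^{n₁} and K₂ ⊆ ℝ^{n₂}, the relative interior of the coproduct K₁ ◇ K₂ := conv(K₁ × {0} ∪ {0} × K₂) equals the union over λ ∈ (0,1) of (1−λ)·relint(K₁) × λ·relint(K₂). -/

import Mathlib

open Set Pointwise

section Aux
variable {E : Type*} [NormedAddCommGroup E] [NormedSpace ℝ E]

lemma my_mem_relint {s : Set E} {x : E} :
    x ∈ intrinsicInterior ℝ s ↔
      x ∈ affineSpan ℝ s ∧ ∃ ε > (0:ℝ), ∀ y, y ∈ affineSpan ℝ s → dist y x < ε → y ∈ s := by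
  rw [mem_intrinsicInterior]
  constructor
  · rintro ⟨⟨y, hy⟩, hint, rfl⟩
    refine ⟨hy, ?_⟩
    rw [mem_interior_iff_mem_nhds, Metric.mem_nhds_iff] at hint
    obtain ⟨ε, hε, hball⟩ := hint
    refine ⟨ε, hε, fun z hz hd => ?_⟩
    have : (⟨z, hz⟩ : affineSpan ℝ s) ∈ Metric.ball (⟨y, hy⟩ : affineSpan ℝ s) ε := by
      simpa [Metric.mem_ball, Subtype.dist_eq] using hd
    exact hball this
  · rintro ⟨hx, ε, hε, h⟩
    refine ⟨⟨x, hx⟩, ?_, rfl⟩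
    rw [mem_interior_iff_mem_nhds, Metric.mem_nhds_iff]
    exact ⟨ε, hε, fun z hz => h z.1 z.2 (by simpa [Subtype.dist_eq, Metric.mem_ball] using hz)⟩

lemma my_relint_subset_span {s : Set E} {x : E} (h : x ∈ intrinsicInterior ℝ s) :
    x ∈ affineSpan ℝ s := (my_mem_relint.1 h).1

lemma my_relint_mono {s t : Set E} (hst : s ⊆ t)
    (hspan : affineSpan ℝ s = affineSpan ℝ t) :
    intrinsicInterior ℝ s ⊆ intrinsicInterior ℝ t := by
  intro x hx
  rw [my_mem_relint] at hx ⊢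
  obtain ⟨hx1, ε, hε, h⟩ := hx
  exact ⟨hspan ▸ hx1, ε, hε, fun y hy hd => hst (h y (hspan ▸ hy) hd)⟩

lemma my_stretch {s : Set E} {x a : E} (hx : x ∈ intrinsicInterior ℝ s)
    (ha : a ∈ affineSpan ℝ s) :
    ∃ δ > (0:ℝ), ∀ t : ℝ, 0 ≤ t → t ≤ δ → x + t • (x - a) ∈ s := by
  obtain ⟨hxs, ε, hε, h⟩ := my_mem_relint.1 hx
  refine ⟨ε / (2 * (‖x - a‖ + 1)), by positivity, fun t ht0 htδ => ?_⟩
  have hmem : x + t • (x - a) ∈ affineSpan ℝ s := by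
    have := AffineSubspace.smul_vsub_vadd_mem (affineSpan ℝ s) t hxs ha hxs
    simpa [vsub_eq_sub, vadd_eq_add, add_comm] using this
  refine h _ hmem ?_
  have hna : (0:ℝ) < ‖x - a‖ + 1 := by positivity
  have : dist (x + t • (x - a)) x = t * ‖x - a‖ := by
    rw [dist_eq_norm]
    simp [norm_smul, abs_of_nonneg ht0]
  rw [this]
  have h1 : t * ‖x - a‖ ≤ (ε / (2 * (‖x - a‖ + 1))) * (‖x - a‖ + 1) := by
    apply mul_le_mul htδ (by linarith) (norm_nonneg _) (by positivity)
  have h2 : (ε / (2 * (‖x - a‖ + 1))) * (‖x - a‖ + 1) = ε / 2 := by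
    field_simp
  linarith

lemma my_openSegment_subset_relint {s : Set E} (hs : Convex ℝ s) {x y : E}
    (hx : x ∈ intrinsicInterior ℝ s) (hy : y ∈ closure s)
    [FiniteDimensional ℝ E] :
    openSegment ℝ x y ⊆ intrinsicInterior ℝ s := by
  obtain ⟨hxs, ε, hε, h⟩ := my_mem_relint.1 hx
  have hys : y ∈ affineSpan ℝ s :=
    (affineSpan ℝ s).closed_of_finiteDimensional.closure_subset_iff.2 (subset_affineSpan ℝ s) hy
  rintro z ⟨a, b, ha, hb, hab, rfl⟩
  -- choose y' ∈ s close to y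
  obtain ⟨y', hy's, hy'd⟩ := Metric.mem_closure_iff.1 hy (a * ε / (2 * b)) (by positivity)
  rw [my_mem_relint]
  constructor
  · have := AffineSubspace.smul_vsub_vadd_mem (affineSpan ℝ s) b hys hxs hxs
    have he : b • (y -ᵥ x) +ᵥ x = a • x + b • y := by
      simp only [vsub_eq_sub, vadd_eq_add]
      have : a = 1 - b := by linarith
      rw [this]; module
    rwa [he] at this
  refine ⟨a * ε / 2, by positivity, fun w hw hwd => ?_⟩
  set x' := a⁻¹ • (w - b • y') with hx'
  have hax' : a • x' = w - b • y' := by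
    rw [hx', smul_smul, mul_inv_cancel₀ ha.ne', one_smul]
  have hx'span : x' ∈ affineSpan ℝ s := by
    have hy'span : y' ∈ affineSpan ℝ s := subset_affineSpan ℝ s hy's
    have := AffineSubspace.smul_vsub_vadd_mem (affineSpan ℝ s) a⁻¹ hw hy'span hy'span
    have he : a⁻¹ • (w -ᵥ y') +ᵥ y' = x' := by
      simp only [vsub_eq_sub, vadd_eq_add, hx']
      have hb1 : b = 1 - a := by linarith
      rw [hb1]
      match_scalars <;> (field_simp; try ring)
    rwa [he] at this
  -- bound dist x' x
  have key : a • (x' - x) = (w - (a • x + b • y)) + b • (y - y') := by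
    rw [smul_sub, hax']
    module
  have hd : dist x' x < ε := by
    have h1 : ‖a • (x' - x)‖ ≤ dist w (a • x + b • y) + b * dist y y' := by
      rw [key]
      refine (norm_add_le _ _).trans ?_
      rw [dist_eq_norm, dist_eq_norm, norm_smul, Real.norm_eq_abs, abs_of_pos hb]
    have h2 : b * dist y y' < a * ε / 2 := by
      have := (mul_lt_mul_iff_right₀ hb).2 hy'd
      calc b * dist y y' < b * (a * ε / (2 * b)) := this
        _ = a * ε / 2 := by field_simp
    have h3 : ‖a • (x' - x)‖ = a * dist x' x := by
      rw [norm_smul, Real.norm_eq_abs, abs_of_pos ha, dist_eq_norm]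
    nlinarith [dist_nonneg (x := x') (y := x)]
  have hx's : x' ∈ s := h x' hx'span hd
  have : a • x' + b • y' ∈ s := hs hx's hy's ha.le hb.le hab
  have hw' : a • x' + b • y' = w := by rw [hax']; module
  rwa [hw'] at this

lemma my_convex_relint [FiniteDimensional ℝ E] {s : Set E} (hs : Convex ℝ s) :
    Convex ℝ (intrinsicInterior ℝ s) := by
  intro x hx y hy a b ha hb hab
  rcases eq_or_lt_of_le ha with rfl | ha'
  · simpa [show b = 1 by linarith] using hy
  rcases eq_or_lt_of_le hb with rfl | hb'
  · simpa [show a = 1 by linarith] using hx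
  exact my_openSegment_subset_relint hs hx (subset_closure (intrinsicInterior_subset hy))
    ⟨a, b, ha', hb', hab, rfl⟩

lemma my_span_closure [FiniteDimensional ℝ E] (s : Set E) :
    affineSpan ℝ (closure s) = affineSpan ℝ s := by
  refine le_antisymm (affineSpan_le.2 ?_) (affineSpan_mono ℝ subset_closure)
  exact (affineSpan ℝ s).closed_of_finiteDimensional.closure_subset_iff.2 (subset_affineSpan ℝ s)

lemma my_relint_closure [FiniteDimensional ℝ E] {s : Set E} (hs : Convex ℝ s) :
    intrinsicInterior ℝ (closure s) = intrinsicInterior ℝ s := by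
  rcases s.eq_empty_or_nonempty with rfl | hne
  · simp
  refine subset_antisymm ?_ (my_relint_mono subset_closure (my_span_closure s).symm)
  intro z hz
  obtain ⟨x₀, hx₀⟩ := hne.intrinsicInterior hs
  have hx₀span : z + (1:ℝ) • (z - x₀) ∈ closure s → True := fun _ => trivial
  obtain ⟨δ, hδ, hp⟩ := my_stretch hz
    (by rw [my_span_closure s]; exact subset_affineSpan ℝ s (intrinsicInterior_subset hx₀))
  have hpz : z + δ • (z - x₀) ∈ closure s := hp δ hδ.le le_rfl
  have hseg : z ∈ openSegment ℝ x₀ (z + δ • (z - x₀)) := by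
    refine ⟨δ / (1 + δ), 1 / (1 + δ), by positivity, by positivity, by field_simp; ring, ?_⟩
    match_scalars <;> (field_simp; try ring)
  exact my_openSegment_subset_relint hs hx₀ hpz hseg

lemma my_relint_sandwich [FiniteDimensional ℝ E] {s t : Set E} (hs : Convex ℝ s)
    (ht : Convex ℝ t) (hst : s ⊆ t) (hts : t ⊆ closure s) :
    intrinsicInterior ℝ t = intrinsicInterior ℝ s := by
  have hspan : affineSpan ℝ s = affineSpan ℝ t := by
    refine le_antisymm (affineSpan_mono ℝ hst) (affineSpan_le.2 (hts.trans ?_))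
    exact (affineSpan ℝ s).closed_of_finiteDimensional.closure_subset_iff.2 (subset_affineSpan ℝ s)
  refine subset_antisymm ?_ (my_relint_mono hst hspan)
  have h1 : intrinsicInterior ℝ t ⊆ intrinsicInterior ℝ (closure s) := by
    refine my_relint_mono hts ?_
    rw [my_span_closure s, hspan]
  rwa [my_relint_closure hs] at h1

end Aux

set_option maxHeartbeats 2000000 in
theorem stmt4 (n₁ n₂ : ℕ) (K₁ : Set (Fin n₁ → ℝ)) (K₂ : Set (Fin n₂ → ℝ))
    (h₁v : Convex ℝ K₁) (h₁n : K₁.Nonempty)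
    (h₂v : Convex ℝ K₂) (h₂n : K₂.Nonempty) :
    intrinsicInterior ℝ
        (convexHull ℝ
          ((fun x => (x, (0 : Fin n₂ → ℝ))) '' K₁ ∪ (fun y => ((0 : Fin n₁ → ℝ), y)) '' K₂)) =
      ⋃ l ∈ Ioo (0 : ℝ) 1,
        ((1 - l) • intrinsicInterior ℝ K₁) ×ˢ (l • intrinsicInterior ℝ K₂) := by
  set A := (fun x => (x, (0 : Fin n₂ → ℝ))) '' K₁ with hA
  set B := (fun y => ((0 : Fin n₁ → ℝ), y)) '' K₂ with hB
  set C := convexHull ℝ (A ∪ B) with hC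
  set U := ⋃ l ∈ Ioo (0:ℝ) 1,
      ((1 - l) • intrinsicInterior ℝ K₁) ×ˢ (l • intrinsicInterior ℝ K₂) with hU
  have hUmem : ∀ z : (Fin n₁ → ℝ) × (Fin n₂ → ℝ), z ∈ U ↔
      ∃ (l : ℝ) (x : Fin n₁ → ℝ) (y : Fin n₂ → ℝ), 0 < l ∧ l < 1 ∧ x ∈ intrinsicInterior ℝ K₁ ∧ y ∈ intrinsicInterior ℝ K₂ ∧
        z = ((1 - l) • x, l • y) := by
    intro z
    simp only [hU, mem_iUnion, mem_Ioo, exists_prop, mem_prod, Set.mem_smul_set]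
    constructor
    · rintro ⟨l, ⟨hl0, hl1⟩, ⟨x, hx, hx'⟩, ⟨y, hy, hy'⟩⟩
      exact ⟨l, x, y, hl0, hl1, hx, hy, by rw [hx', hy']⟩
    · rintro ⟨l, x, y, hl0, hl1, hx, hy, rfl⟩
      exact ⟨l, ⟨hl0, hl1⟩, ⟨x, hx, rfl⟩, ⟨y, hy, rfl⟩⟩
  have hCmem : ∀ (l : ℝ) (x : Fin n₁ → ℝ) (y : Fin n₂ → ℝ), 0 ≤ l → l ≤ 1 → x ∈ K₁ → y ∈ K₂ →
      ((1 - l) • x, l • y) ∈ C := by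
    intro l x y hl0 hl1 hx hy
    have h1 : (x, (0 : Fin n₂ → ℝ)) ∈ C := subset_convexHull ℝ _ (Or.inl ⟨x, hx, rfl⟩)
    have h2 : ((0 : Fin n₁ → ℝ), y) ∈ C := subset_convexHull ℝ _ (Or.inr ⟨y, hy, rfl⟩)
    have h3 := (convex_convexHull ℝ (A ∪ B)) h1 h2 (a := 1 - l) (b := l) (by linarith) hl0 (by ring)
    simpa [Prod.smul_mk, Prod.mk_add_mk] using h3
  have hUC : U ⊆ C := by
    intro z hz
    rw [hUmem] at hz
    obtain ⟨l, x, y, hl0, hl1, hx, hy, rfl⟩ := hz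
    exact hCmem l x y hl0.le hl1.le (intrinsicInterior_subset hx) (intrinsicInterior_subset hy)
  have hUconv : Convex ℝ U := by
    intro z₁ hz₁ z₂ hz₂ c d hc hd hcd
    rcases eq_or_lt_of_le hc with rfl | hc'
    · simpa [show d = 1 by linarith] using hz₂
    rcases eq_or_lt_of_le hd with rfl | hd'
    · simpa [show c = 1 by linarith] using hz₁
    rw [hUmem] at hz₁ hz₂ ⊢
    obtain ⟨l, x₁, y₁, hl0, hl1, hx₁, hy₁, rfl⟩ := hz₁
    obtain ⟨m, x₂, y₂, hm0, hm1, hx₂, hy₂, rfl⟩ := hz₂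
    have hlam0 : 0 < c * l + d * m := by positivity
    have hlam1 : c * l + d * m < 1 := by nlinarith
    have h1lam : 0 < 1 - (c * l + d * m) := by linarith
    have hne1 : 1 - (c * l + d * m) ≠ 0 := h1lam.ne'
    have hne2 : c * l + d * m ≠ 0 := hlam0.ne'
    refine ⟨c * l + d * m,
      (c*(1-l)/(1-(c * l + d * m))) • x₁ + (d*(1-m)/(1-(c * l + d * m))) • x₂,
      (c*l/(c * l + d * m)) • y₁ + (d*m/(c * l + d * m)) • y₂, hlam0, hlam1, ?_, ?_, ?_⟩
    · refine my_convex_relint h₁v hx₁ hx₂ ?_ ?_ ?_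
      · exact div_nonneg (by nlinarith) h1lam.le
      · exact div_nonneg (by nlinarith) h1lam.le
      · rw [← add_div, div_eq_one_iff_eq hne1]
        linear_combination hcd
    · refine my_convex_relint h₂v hy₁ hy₂ ?_ ?_ ?_
      · exact div_nonneg (by nlinarith) hlam0.le
      · exact div_nonneg (by nlinarith) hlam0.le
      · rw [← add_div, div_eq_one_iff_eq hne2]
    · rw [Prod.ext_iff]
      constructor <;> simp only [Prod.fst_add, Prod.snd_add, Prod.smul_mk, Prod.fst, Prod.snd] <;>
        match_scalars <;> (field_simp; try ring)
  have hCclU : C ⊆ closure U := by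
    obtain ⟨a, haa⟩ := h₁n.intrinsicInterior h₁v
    obtain ⟨b, hbb⟩ := h₂n.intrinsicInterior h₂v
    refine convexHull_min ?_ hUconv.closure
    rintro z (⟨x, hx, rfl⟩ | ⟨y, hy, rfl⟩)
    · have hcont : Continuous fun t : ℝ => (((1 - t) • ((1 - t) • x + t • a), t • b) :
          (Fin n₁ → ℝ) × (Fin n₂ → ℝ)) := by fun_prop
      have hf : Filter.Tendsto (fun t : ℝ => (((1 - t) • ((1 - t) • x + t • a), t • b) :
          (Fin n₁ → ℝ) × (Fin n₂ → ℝ)))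
          (nhdsWithin 0 (Ioi 0)) (nhds (x, (0 : Fin n₂ → ℝ))) := by
        have h0 := (hcont.tendsto 0).mono_left (nhdsWithin_le_nhds (s := Ioi (0:ℝ)))
        simpa using h0
      refine mem_closure_of_tendsto hf ?_
      filter_upwards [Ioo_mem_nhdsGT_of_mem
        (show (0:ℝ) ∈ Ico (0:ℝ) 1 from ⟨le_rfl, one_pos⟩)] with t ht
      rw [hUmem]
      refine ⟨t, (1 - t) • x + t • a, b, ht.1, ht.2, ?_, hbb, rfl⟩
      exact my_openSegment_subset_relint h₁v haa (subset_closure hx)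
        ⟨t, 1 - t, ht.1, by linarith [ht.2], by ring, by module⟩
    · have hcont : Continuous fun t : ℝ => ((t • a, (1 - t) • ((1 - t) • y + t • b)) :
          (Fin n₁ → ℝ) × (Fin n₂ → ℝ)) := by fun_prop
      have hf : Filter.Tendsto (fun t : ℝ => ((t • a, (1 - t) • ((1 - t) • y + t • b)) :
          (Fin n₁ → ℝ) × (Fin n₂ → ℝ)))
          (nhdsWithin 0 (Ioi 0)) (nhds ((0 : Fin n₁ → ℝ), y)) := by
        have h0 := (hcont.tendsto 0).mono_left (nhdsWithin_le_nhds (s := Ioi (0:ℝ)))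
        simpa using h0
      refine mem_closure_of_tendsto hf ?_
      filter_upwards [Ioo_mem_nhdsGT_of_mem
        (show (0:ℝ) ∈ Ico (0:ℝ) 1 from ⟨le_rfl, one_pos⟩)] with t ht
      rw [hUmem]
      refine ⟨1 - t, a, (1 - t) • y + t • b, by linarith [ht.2], by linarith [ht.1], haa, ?_, ?_⟩
      · exact my_openSegment_subset_relint h₂v hbb (subset_closure hy)
          ⟨t, 1 - t, ht.1, by linarith [ht.2], by ring, by module⟩
      · norm_num
  have hkey : intrinsicInterior ℝ C = intrinsicInterior ℝ U :=
    my_relint_sandwich hUconv (convex_convexHull ℝ _) hUC hCclU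
  have hCne : C.Nonempty := by
    obtain ⟨x0, hx0⟩ := h₁n
    exact ⟨(x0, 0), subset_convexHull ℝ _ (Or.inl ⟨x0, hx0, rfl⟩)⟩
  apply subset_antisymm
  · rw [hkey]; exact intrinsicInterior_subset
  · intro z hz
    obtain ⟨x₀, hx₀⟩ := hCne.intrinsicInterior (convex_convexHull ℝ _)
    have hx₀U : x₀ ∈ U := intrinsicInterior_subset (hkey ▸ hx₀)
    rw [hUmem] at hx₀U
    obtain ⟨m, aa, bb, hm0, hm1, haa, hbb, hx₀e⟩ := hx₀U
    rw [hUmem] at hz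
    obtain ⟨l, x, y, hl0, hl1, hx, hy, rfl⟩ := hz
    have hl1' : 0 < 1 - l := by linarith
    have hm1' : 0 < 1 - m := by linarith
    obtain ⟨ε₁, hε₁, hstr₁⟩ := my_stretch hx (subset_affineSpan ℝ K₁ (intrinsicInterior_subset haa))
    obtain ⟨ε₂, hε₂, hstr₂⟩ := my_stretch hy (subset_affineSpan ℝ K₂ (intrinsicInterior_subset hbb))
    set δ := min (min (l/(2*m)) ((1-l)/(2*(1-m))))
        (min (ε₁*(1-l)/(2*(1-m)*(1+ε₁))) (ε₂*l/(2*m*(1+ε₂)))) with hδdef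
    have hB1 : (0:ℝ) < 2*m := by linarith
    have hB2 : (0:ℝ) < 2*(1-m) := by linarith
    have hB3 : (0:ℝ) < 2*(1-m)*(1+ε₁) := by nlinarith
    have hB4 : (0:ℝ) < 2*m*(1+ε₂) := by nlinarith
    have hδ0 : 0 < δ := lt_min (lt_min (div_pos hl0 hB1) (div_pos hl1' hB2))
      (lt_min (div_pos (mul_pos hε₁ hl1') hB3) (div_pos (mul_pos hε₂ hl0) hB4))
    have hδ1 : δ ≤ l/(2*m) := (min_le_left _ _).trans (min_le_left _ _)
    have hδ2 : δ ≤ (1-l)/(2*(1-m)) := (min_le_left _ _).trans (min_le_right _ _)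
    have hδ3 : δ ≤ ε₁*(1-l)/(2*(1-m)*(1+ε₁)) := (min_le_right _ _).trans (min_le_left _ _)
    have hδ4 : δ ≤ ε₂*l/(2*m*(1+ε₂)) := (min_le_right _ _).trans (min_le_right _ _)
    have hδ1' : δ * (2*m) ≤ l := (le_div_iff₀ hB1).1 hδ1
    have hδ2' : δ * (2*(1-m)) ≤ 1-l := (le_div_iff₀ hB2).1 hδ2
    have hδ3' : δ * (2*(1-m)*(1+ε₁)) ≤ ε₁*(1-l) := (le_div_iff₀ hB3).1 hδ3
    have hδ4' : δ * (2*m*(1+ε₂)) ≤ ε₂*l := (le_div_iff₀ hB4).1 hδ4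
    clear_value δ
    clear hδdef hδ1 hδ2 hδ3 hδ4 hUC hUconv hCclU hkey hU hC hA hB
    have hq : 0 < (1-l) - δ*(1-m) := by nlinarith [mul_pos hδ0 hm1', hδ2']
    have hr : 0 < l - δ*m := by nlinarith [mul_pos hδ0 hm0, hδ1']
    have hδlt1 : δ < 1 := by nlinarith
    have hee1nn : 0 ≤ δ*(1-m)/((1-l)-δ*(1-m)) := div_nonneg (mul_nonneg hδ0.le hm1'.le) hq.le
    have hee2nn : 0 ≤ δ*m/(l-δ*m) := div_nonneg (mul_nonneg hδ0.le hm0.le) hr.le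
    have hee1 : δ*(1-m)/((1-l)-δ*(1-m)) ≤ ε₁ := by
      rw [div_le_iff₀ hq]
      have h2 : 0 ≤ δ*(1-m) := mul_nonneg hδ0.le hm1'.le
      have h3 : 0 ≤ δ*(1-m)*ε₁ := mul_nonneg h2 hε₁.le
      nlinarith [h2, h3, hδ3']
    have hee2 : δ*m/(l-δ*m) ≤ ε₂ := by
      rw [div_le_iff₀ hr]
      have h2 : 0 ≤ δ*m := mul_nonneg hδ0.le hm0.le
      have h3 : 0 ≤ δ*m*ε₂ := mul_nonneg h2 hε₂.le
      nlinarith [h2, h3, hδ4']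
    have hx₁ : x + (δ*(1-m)/((1-l)-δ*(1-m))) • (x - aa) ∈ K₁ := hstr₁ _ hee1nn hee1
    have hy₁ : y + (δ*m/(l-δ*m)) • (y - bb) ∈ K₂ := hstr₂ _ hee2nn hee2
    have hlam'0 : 0 ≤ (l - δ*m)/(1-δ) := div_nonneg hr.le (by linarith)
    have hlam'1 : (l - δ*m)/(1-δ) ≤ 1 := by
      rw [div_le_one (by linarith)]
      have h2 : 0 < δ*(1-m) := mul_pos hδ0 hm1'
      nlinarith [h2, hδ2']
    have hp : ((1 - (l - δ*m)/(1-δ)) • (x + (δ*(1-m)/((1-l)-δ*(1-m))) • (x - aa)),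
        ((l - δ*m)/(1-δ)) • (y + (δ*m/(l-δ*m)) • (y - bb))) ∈ C :=
      hCmem _ _ _ hlam'0 hlam'1 hx₁ hy₁
    refine my_openSegment_subset_relint (convex_convexHull ℝ _) hx₀ (subset_closure hp) ?_
    refine ⟨δ, 1 - δ, hδ0, by linarith, by ring, ?_⟩
    rw [hx₀e]
    have hδne : (1:ℝ) - δ ≠ 0 := by linarith
    simp only [Prod.smul_mk, Prod.mk_add_mk, Prod.mk.injEq]
    have hqne : (1-l) - δ*(1-m) ≠ 0 := hq.ne'
    have hrne : l - δ*m ≠ 0 := hr.ne'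
    constructor
    · match_scalars <;> (field_simp; try ring)
    · match_scalars <;> (field_simp; try ring)
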